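/- For every 2-coloring of the edges of the transitive tournament on {1,...,n} (where the edge between i < j is directed from i to j), there exists a monochromatic directed path with at least ⌈√n⌉ vertices. -/

import Mathlib

def ecol (n : ℕ) (col : Fin n → Fin n → Fin 2) (i j : ℕ) : Fin 2 :=
  if h : i < n ∧ j < n then col ⟨i, h.1⟩ ⟨j, h.2⟩ else 0

def L (n : ℕ) (col : Fin n → Fin n → Fin 2) (c : Fin 2) (v : ℕ) : ℕ :=
  1 + ((List.range v).attach.map
    (fun u => if ecol n col u.1 v = c then L n col c u.1 else 0)).foldr max 0
termination_by v
decreasing_by exact List.mem_range.mp u.2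

lemma foldr_max_ge (l : List ℕ) (x : ℕ) (hx : x ∈ l) : x ≤ l.foldr max 0 := by
  induction l with
  | nil => simp at hx
  | cons a t ih =>
    rcases List.mem_cons.mp hx with h | h
    · simp [h, le_max_iff]
    · simp [le_max_iff, ih h]

lemma foldr_max_mem (l : List ℕ) : l.foldr max 0 = 0 ∨ l.foldr max 0 ∈ l := by
  induction l with
  | nil => left; rfl
  | cons a t ih =>
    simp only [List.foldr_cons]
    rcases le_total a (t.foldr max 0) with h | h
    · rw [max_eq_right h]
      rcases ih with h0 | hm
      · left; exact h0
      · right; exact List.mem_cons_of_mem _ hm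
    · rw [max_eq_left h]
      right; exact List.mem_cons_self

lemma L_pos (n col c v) : 1 ≤ L n col c v := by
  rw [L]; omega

lemma L_lt (n col c) {u v : ℕ} (huv : u < v) (hc : ecol n col u v = c) :
    L n col c u < L n col c v := by
  conv_rhs => rw [L]
  have hmem : (if ecol n col u v = c then L n col c u else 0) ∈
      (List.range v).attach.map
        (fun w => if ecol n col w.1 v = c then L n col c w.1 else 0) :=
    List.mem_map.mpr ⟨⟨u, List.mem_range.mpr huv⟩, List.mem_attach _ _, rfl⟩
  rw [if_pos hc] at hmem
  have := foldr_max_ge _ _ hmem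
  omega

lemma exists_path (n col c) : ∀ v, v < n → ∃ l : List ℕ,
    l ≠ [] ∧ l.length = L n col c v ∧ l.getLast? = some v ∧
    l.Chain' (· < ·) ∧ l.Chain' (fun a b => ecol n col a b = c) ∧ ∀ x ∈ l, x < n := by
  intro v
  induction v using Nat.strong_induction_on with
  | _ v ih =>
    intro hv
    have hL : L n col c v = 1 + ((List.range v).attach.map
      (fun u => if ecol n col u.1 v = c then L n col c u.1 else 0)).foldr max 0 := by
      rw [L]
    set F := ((List.range v).attach.map
      (fun u => if ecol n col u.1 v = c then L n col c u.1 else 0)).foldr max 0 with hF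
    rcases foldr_max_mem ((List.range v).attach.map
      (fun u => if ecol n col u.1 v = c then L n col c u.1 else 0)) with h0 | hm
    · refine ⟨[v], by simp, ?_, by simp, List.isChain_singleton _, List.isChain_singleton _, by simp [hv]⟩
      simp [hL, hF.trans h0]
    · rw [← hF] at hm
      rcases List.mem_map.mp hm with ⟨⟨u, hu⟩, _, heq⟩
      have huv : u < v := List.mem_range.mp hu
      by_cases hc : ecol n col u v = c
      · rw [if_pos hc] at heq
        obtain ⟨l, hne, hlen, hlast, hch1, hch2, hlt⟩ := ih u huv (huv.trans hv)
        refine ⟨l ++ [v], by simp, ?_, ?_, ?_, ?_, ?_⟩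
        · rw [List.length_append, hlen, heq, hL]; simp; omega
        · simp
        · show List.IsChain _ _; rw [List.isChain_append]
          refine ⟨hch1, List.isChain_singleton _, ?_⟩
          intro x hx y hy
          rw [hlast] at hx
          simp at hx hy
          omega
        · show List.IsChain _ _; rw [List.isChain_append]
          refine ⟨hch2, List.isChain_singleton _, ?_⟩
          intro x hx y hy
          rw [hlast] at hx
          simp at hx hy
          exact hx ▸ hy ▸ hc
        · intro x hx
          rcases List.mem_append.mp hx with h | h
          · exact hlt x h
          · simp at h; omega
      · rw [if_neg hc] at heq
        refine ⟨[v], by simp, ?_, by simp, List.isChain_singleton _, List.isChain_singleton _, by simp [hv]⟩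
        simp [hL, ← heq]

lemma ecol_def (n : ℕ) (col : Fin n → Fin n → Fin 2) (i j : ℕ) (hi : i < n) (hj : j < n) :
    ecol n col i j = col ⟨i, hi⟩ ⟨j, hj⟩ := by
  rw [ecol, dif_pos ⟨hi, hj⟩]

lemma exists_big (n : ℕ) (col : Fin n → Fin n → Fin 2) (hn : 1 ≤ n) :
    ∃ c v, v < n ∧ ⌈Real.sqrt n⌉₊ ≤ L n col c v := by
  set M0 := (Finset.range n).sup (L n col 0) with hM0
  set M1 := (Finset.range n).sup (L n col 1) with hM1
  have hcard : n ≤ M0 * M1 := by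
    have hinj : Set.InjOn (fun v => (L n col 0 v, L n col 1 v)) (Finset.range n) := by
      intro u hu v hv heq
      simp only [Prod.mk.injEq] at heq
      by_contra hne
      rcases Nat.lt_or_ge u v with h | h
      · rcases Fin.exists_fin_two.mp ⟨ecol n col u v, rfl⟩ with h2 | h2
        all_goals {
          have := L_lt n col _ h h2
          omega }
      · have h' : v < u := by omega
        rcases Fin.exists_fin_two.mp ⟨ecol n col v u, rfl⟩ with h2 | h2
        all_goals {
          have := L_lt n col _ h' h2
          omega }
    have hmaps : ∀ v ∈ Finset.range n,
        (L n col 0 v, L n col 1 v) ∈ Finset.Icc 1 M0 ×ˢ Finset.Icc 1 M1 := by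
      intro v hv
      simp only [Finset.mem_product, Finset.mem_Icc]
      exact ⟨⟨L_pos _ _ _ _, Finset.le_sup hv⟩, ⟨L_pos _ _ _ _, Finset.le_sup hv⟩⟩
    have := Finset.card_le_card_of_injOn _ hmaps hinj
    simpa [Nat.card_Icc] using this
  set M := max M0 M1 with hM
  have hM2 : n ≤ M * M := le_trans hcard
    (Nat.mul_le_mul (le_max_left _ _) (le_max_right _ _))
  have hceil : ⌈Real.sqrt n⌉₊ ≤ M := by
    rw [Nat.ceil_le]
    calc Real.sqrt n ≤ Real.sqrt (M * M) := by
          apply Real.sqrt_le_sqrt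
          exact_mod_cast hM2
      _ = M := by
          rw [show ((M : ℝ) * M) = (M:ℝ)^2 by ring, Real.sqrt_sq (by positivity)]
  have hne : (Finset.range n).Nonempty := ⟨0, Finset.mem_range.mpr hn⟩
  rcases max_cases M0 M1 with ⟨hMe, _⟩ | ⟨hMe, _⟩
  · obtain ⟨v, hv, hveq⟩ := Finset.exists_mem_eq_sup (Finset.range n) hne (L n col 0)
    exact ⟨0, v, Finset.mem_range.mp hv, by rw [← hveq, ← hM0]; omega⟩
  · obtain ⟨v, hv, hveq⟩ := Finset.exists_mem_eq_sup (Finset.range n) hne (L n col 1)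
    exact ⟨1, v, Finset.mem_range.mp hv, by rw [← hveq, ← hM1]; omega⟩

/-- Every 2-coloring of the edges of the transitive tournament on `n` vertices
contains a monochromatic directed path with at least `⌈√n⌉` vertices. -/
theorem two_color_mono_path (n : ℕ) (col : Fin n → Fin n → Fin 2) :
    ∃ s : Fin ⌈Real.sqrt n⌉₊ → Fin n, StrictMono s ∧
      ∃ c : Fin 2, ∀ (i : ℕ) (h : i + 1 < ⌈Real.sqrt n⌉₊),
        col (s ⟨i, by omega⟩) (s ⟨i + 1, h⟩) = c := by
  rcases Nat.eq_zero_or_pos n with hn | hn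
  · have hk : ⌈Real.sqrt n⌉₊ = 0 := by simp [hn]
    refine ⟨fun i => absurd i.2 (by omega), fun a b _ => absurd a.2 (by omega),
      0, fun i h => absurd h (by omega)⟩
  · obtain ⟨c, v, hv, hLv⟩ := exists_big n col hn
    obtain ⟨l, hne, hlen, _, hch1, hch2, hltn⟩ := exists_path n col c v hv
    set k := ⌈Real.sqrt n⌉₊ with hk
    have hkN : k ≤ l.length := by rw [hlen]; exact hLv
    have hget : ∀ i : ℕ, i < k → l.length - k + i < l.length := by
      intro i hi; omega
    refine ⟨fun i => ⟨l.get ⟨l.length - k + i.1, hget i.1 i.2⟩,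
      hltn _ (l.get_mem _)⟩, ?_, c, ?_⟩
    · intro a b hab
      have hp : l.Pairwise (· < ·) := List.isChain_iff_pairwise.mp hch1
      have := List.pairwise_iff_get.mp hp ⟨l.length - k + a.1, hget a.1 a.2⟩
        ⟨l.length - k + b.1, hget b.1 b.2⟩ (by simp; omega)
      exact this
    · intro i h
      have hcons := List.isChain_iff_getElem.mp hch2 (l.length - k + i)
        (by omega)
      have heq : ecol n col (l.get ⟨l.length - k + i, by omega⟩)
          (l.get ⟨l.length - k + i + 1, by omega⟩) = c := hcons
      rw [ecol_def n col _ _ (hltn _ (l.get_mem _)) (hltn _ (l.get_mem _))] at heq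
      convert heq using 3
      simp [Nat.add_assoc]
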